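/- arXiv:1406.0885 — 3 statements merged into one kernel-verified Lean document; each statement's English description precedes it below -/
import Mathlib

section
/- Let ω : [0,T] → ℝ be continuous with ω(0) = 0, let b < 0 < b̄ and K₁ ≥ b̄ > K₂ ≥ b. Define α₁ = 1/(K₁−b), α₂ = (b̄−b)/((K₁−b)(b̄−K₂)), α₄ = (K₁−b̄)/(K₁−b), β₁ = α₂−α₁, β₂ = α₁, β₃ = α₂. Then the indicator of the complement event {sup ω < b̄ or inf ω ≤ b} is bounded above by α₂(K₂−ω(T))⁺ + (1−α₄)·1_{ω(T) < b̄} − α₂(ω(T)−b̄)⁺ + α₁(ω(T)−K₁)⁺ + α₄ + β₁(ω(T)−b̄)·1_{H_{b̄} < H_b ∧ T} + β₂(ω(T)−b)·1_{H_{b̄} < H_b ≤ T} + β₃(ω(T)−b)·1_{H_b < H_{b̄} ∧ T}. -/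
open Set

noncomputable def pos (x : ℝ) : ℝ := max x 0

open Classical in
noncomputable def ind (P : Prop) : ℝ := if P then 1 else 0

/-- First hitting time (before time `T`) of level `x` by the path `ω`, valued in `EReal`
(`⊤` if the level is not hit in `[0,T]`). -/
noncomputable def hit (ω : ℝ → ℝ) (T x : ℝ) : EReal :=
  sInf {s : EReal | ∃ t : ℝ, s = (t : EReal) ∧ 0 ≤ t ∧ t ≤ T ∧ ω t = x}

lemma ind_le_one' (P : Prop) : ind P ≤ 1 := by unfold ind; split <;> norm_num

lemma ind_nonneg' (P : Prop) : 0 ≤ ind P := by unfold ind; split <;> norm_num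

lemma ind_true' {P : Prop} (h : P) : ind P = 1 := by simp [ind, h]

lemma ind_false' {P : Prop} (h : ¬P) : ind P = 0 := by simp [ind, h]

lemma hit_le' {ω : ℝ → ℝ} {T x t : ℝ} (h0 : 0 ≤ t) (hT : t ≤ T) (hx : ω t = x) :
    hit ω T x ≤ (t : EReal) := sInf_le ⟨t, rfl, h0, hT, hx⟩

lemma hit_eq_top' {ω : ℝ → ℝ} {T x : ℝ} (h : ∀ t, 0 ≤ t → t ≤ T → ω t ≠ x) :
    hit ω T x = ⊤ := by
  unfold hit
  refine (congrArg sInf (?_ : _ = (∅ : Set EReal))).trans sInf_empty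
  ext s
  simp only [mem_setOf_eq, mem_empty_iff_false, iff_false]
  rintro ⟨t, rfl, h0, hT, hx⟩
  exact h t h0 hT hx

lemma hit_attained' {ω : ℝ → ℝ} {T x : ℝ} (hcont : ContinuousOn ω (Icc 0 T))
    (h : ∃ t ∈ Icc 0 T, ω t = x) :
    ∃ t ∈ Icc 0 T, ω t = x ∧ hit ω T x = (t : EReal) := by
  set S : Set ℝ := Icc 0 T ∩ ω ⁻¹' {x} with hS
  have hSne : S.Nonempty := by
    obtain ⟨t, ht, hx⟩ := h
    exact ⟨t, ht, hx⟩
  have hSclosed : IsClosed S :=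
    hcont.preimage_isClosed_of_isClosed isClosed_Icc isClosed_singleton
  have hSbdd : BddBelow S := ⟨0, fun t ht => ht.1.1⟩
  have hmem : sInf S ∈ S := hSclosed.csInf_mem hSne hSbdd
  refine ⟨sInf S, hmem.1, hmem.2, le_antisymm (hit_le' hmem.1.1 hmem.1.2 hmem.2) ?_⟩
  apply le_sInf
  rintro s ⟨t, rfl, h0, hT', hx⟩
  exact_mod_cast csInf_le hSbdd ⟨⟨h0, hT'⟩, hx⟩

lemma reach_up' {ω : ℝ → ℝ} {T ub : ℝ} (hcont : ContinuousOn ω (Icc 0 T)) (hω0 : ω 0 = 0)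
    (hub : 0 < ub) {t : ℝ} (ht : t ∈ Icc 0 T) (h : ub ≤ ω t) :
    ∃ s ∈ Icc 0 T, ω s = ub := by
  have hsub : Icc 0 t ⊆ Icc 0 T := Icc_subset_Icc le_rfl ht.2
  have hmem : ub ∈ Icc (ω 0) (ω t) := by rw [hω0]; exact ⟨hub.le, h⟩
  obtain ⟨s, hs, hsx⟩ := intermediate_value_Icc ht.1 (hcont.mono hsub) hmem
  exact ⟨s, hsub hs, hsx⟩

lemma reach_down' {ω : ℝ → ℝ} {T lb : ℝ} (hcont : ContinuousOn ω (Icc 0 T)) (hω0 : ω 0 = 0)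
    (hlb : lb < 0) {t : ℝ} (ht : t ∈ Icc 0 T) (h : ω t ≤ lb) :
    ∃ s ∈ Icc 0 T, ω s = lb := by
  have hsub : Icc 0 t ⊆ Icc 0 T := Icc_subset_Icc le_rfl ht.2
  have hmem : lb ∈ Icc (ω t) (ω 0) := by rw [hω0]; exact ⟨h, hlb.le⟩
  obtain ⟨s, hs, hsx⟩ := intermediate_value_Icc' ht.1 (hcont.mono hsub) hmem
  exact ⟨s, hsub hs, hsx⟩

section Algebra

variable (lb ub K₁ K₂ x : ℝ)

lemma coreL1 (hlb : lb < 0) (hub : 0 < ub)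
    (hK₁ : ub ≤ K₁) (hK₂ : lb ≤ K₂) (hK₂' : K₂ < ub) :
    1 ≤ ((ub - lb) / ((K₁ - lb) * (ub - K₂))) * pos (K₂ - x) +
        (1 - (K₁ - ub) / (K₁ - lb)) * ind (x < ub) -
        ((ub - lb) / ((K₁ - lb) * (ub - K₂))) * pos (x - ub) +
        (1 / (K₁ - lb)) * pos (x - K₁) + (K₁ - ub) / (K₁ - lb) +
        ((ub - lb) / ((K₁ - lb) * (ub - K₂))) * (x - lb) := by
  have hd1 : (0:ℝ) < K₁ - lb := by linarith
  have hd2 : (0:ℝ) < ub - K₂ := by linarith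
  have hd3 : (0:ℝ) < ub - lb := by linarith
  set A1 := 1 / (K₁ - lb) with hA1
  set A2 := (ub - lb) / ((K₁ - lb) * (ub - K₂)) with hA2
  set A4 := (K₁ - ub) / (K₁ - lb) with hA4
  have hA1n : 0 ≤ A1 := by rw [hA1]; positivity
  have hA2n : 0 ≤ A2 := by rw [hA2]; positivity
  have hA4n : 0 ≤ A4 := by rw [hA4]; apply div_nonneg <;> linarith
  have e2 : A2 * (ub - K₂) = 1 - A4 := by
    rw [hA2, hA4]; field_simp <;> ring
  rcases le_or_gt x K₂ with h1 | h1
  · rw [show pos (K₂ - x) = K₂ - x from max_eq_left (by linarith),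
      show pos (x - ub) = 0 from max_eq_right (by linarith),
      show pos (x - K₁) = 0 from max_eq_right (by linarith),
      ind_true' (show x < ub by linarith)]
    nlinarith [mul_nonneg hA2n (show (0:ℝ) ≤ K₂ - lb by linarith)]
  rcases lt_or_ge x ub with h2 | h2
  · rw [show pos (K₂ - x) = 0 from max_eq_right (by linarith),
      show pos (x - ub) = 0 from max_eq_right (by linarith),
      show pos (x - K₁) = 0 from max_eq_right (by linarith),
      ind_true' h2]
    nlinarith [mul_nonneg hA2n (show (0:ℝ) ≤ x - lb by linarith)]
  rcases le_or_gt x K₁ with h3 | h3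
  · rw [show pos (K₂ - x) = 0 from max_eq_right (by linarith),
      show pos (x - ub) = x - ub from max_eq_left (by linarith),
      show pos (x - K₁) = 0 from max_eq_right (by linarith),
      ind_false' (show ¬ x < ub by linarith)]
    nlinarith [e2, mul_nonneg hA2n (show (0:ℝ) ≤ K₂ - lb by linarith)]
  · rw [show pos (K₂ - x) = 0 from max_eq_right (by linarith),
      show pos (x - ub) = x - ub from max_eq_left (by linarith),
      show pos (x - K₁) = x - K₁ from max_eq_left (by linarith),
      ind_false' (show ¬ x < ub by linarith)]
    nlinarith [e2, mul_nonneg hA2n (show (0:ℝ) ≤ K₂ - lb by linarith),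
      mul_nonneg hA1n (show (0:ℝ) ≤ x - K₁ by linarith)]

lemma coreL2 (hlb : lb < 0) (hub : 0 < ub)
    (hK₁ : ub ≤ K₁) (hK₂ : lb ≤ K₂) (hK₂' : K₂ < ub) :
    1 ≤ ((ub - lb) / ((K₁ - lb) * (ub - K₂))) * pos (K₂ - x) +
        (1 - (K₁ - ub) / (K₁ - lb)) * ind (x < ub) -
        ((ub - lb) / ((K₁ - lb) * (ub - K₂))) * pos (x - ub) +
        (1 / (K₁ - lb)) * pos (x - K₁) + (K₁ - ub) / (K₁ - lb) +
        ((ub - lb) / ((K₁ - lb) * (ub - K₂)) - 1 / (K₁ - lb)) * (x - ub) +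
        (1 / (K₁ - lb)) * (x - lb) := by
  have hd1 : (0:ℝ) < K₁ - lb := by linarith
  have hd2 : (0:ℝ) < ub - K₂ := by linarith
  have hd3 : (0:ℝ) < ub - lb := by linarith
  set A1 := 1 / (K₁ - lb) with hA1
  set A2 := (ub - lb) / ((K₁ - lb) * (ub - K₂)) with hA2
  set A4 := (K₁ - ub) / (K₁ - lb) with hA4
  have hA1n : 0 ≤ A1 := by rw [hA1]; positivity
  have hA2n : 0 ≤ A2 := by rw [hA2]; positivity
  have e1 : A1 * (ub - lb) = 1 - A4 := by
    rw [hA1, hA4]; field_simp <;> ring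
  have e2 : A2 * (ub - K₂) = 1 - A4 := by
    rw [hA2, hA4]; field_simp <;> ring
  rcases le_or_gt x K₂ with h1 | h1
  · rw [show pos (K₂ - x) = K₂ - x from max_eq_left (by linarith),
      show pos (x - ub) = 0 from max_eq_right (by linarith),
      show pos (x - K₁) = 0 from max_eq_right (by linarith),
      ind_true' (show x < ub by linarith)]
    nlinarith [e1, e2]
  rcases lt_or_ge x ub with h2 | h2
  · rw [show pos (K₂ - x) = 0 from max_eq_right (by linarith),
      show pos (x - ub) = 0 from max_eq_right (by linarith),
      show pos (x - K₁) = 0 from max_eq_right (by linarith),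
      ind_true' h2]
    nlinarith [e1, e2, mul_nonneg hA2n (show (0:ℝ) ≤ x - K₂ by linarith)]
  rcases le_or_gt x K₁ with h3 | h3
  · rw [show pos (K₂ - x) = 0 from max_eq_right (by linarith),
      show pos (x - ub) = x - ub from max_eq_left (by linarith),
      show pos (x - K₁) = 0 from max_eq_right (by linarith),
      ind_false' (show ¬ x < ub by linarith)]
    nlinarith [e1]
  · rw [show pos (K₂ - x) = 0 from max_eq_right (by linarith),
      show pos (x - ub) = x - ub from max_eq_left (by linarith),
      show pos (x - K₁) = x - K₁ from max_eq_left (by linarith),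
      ind_false' (show ¬ x < ub by linarith)]
    nlinarith [e1, mul_nonneg hA1n (show (0:ℝ) ≤ x - K₁ by linarith)]

lemma coreL3 (hlb : lb < 0) (hub : 0 < ub)
    (hK₁ : ub ≤ K₁) (hK₂ : lb ≤ K₂) (hK₂' : K₂ < ub) :
    0 ≤ ((ub - lb) / ((K₁ - lb) * (ub - K₂))) * pos (K₂ - x) +
        (1 - (K₁ - ub) / (K₁ - lb)) * ind (x < ub) -
        ((ub - lb) / ((K₁ - lb) * (ub - K₂))) * pos (x - ub) +
        (1 / (K₁ - lb)) * pos (x - K₁) + (K₁ - ub) / (K₁ - lb) +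
        ((ub - lb) / ((K₁ - lb) * (ub - K₂)) - 1 / (K₁ - lb)) * (x - ub) := by
  have hd1 : (0:ℝ) < K₁ - lb := by linarith
  have hd2 : (0:ℝ) < ub - K₂ := by linarith
  have hd3 : (0:ℝ) < ub - lb := by linarith
  set A1 := 1 / (K₁ - lb) with hA1
  set A2 := (ub - lb) / ((K₁ - lb) * (ub - K₂)) with hA2
  set A4 := (K₁ - ub) / (K₁ - lb) with hA4
  have hA1n : 0 ≤ A1 := by rw [hA1]; positivity
  have hA2n : 0 ≤ A2 := by rw [hA2]; positivity
  have hA4n : 0 ≤ A4 := by rw [hA4]; apply div_nonneg <;> linarith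
  have e2 : A2 * (ub - K₂) = 1 - A4 := by
    rw [hA2, hA4]; field_simp <;> ring
  have e4 : A1 * (K₁ - ub) = A4 := by
    rw [hA1, hA4]; field_simp
  have e21 : A1 ≤ A2 := by
    rw [hA1, hA2, div_le_div_iff₀ hd1 (by positivity)]
    nlinarith
  rcases le_or_gt x K₂ with h1 | h1
  · rw [show pos (K₂ - x) = K₂ - x from max_eq_left (by linarith),
      show pos (x - ub) = 0 from max_eq_right (by linarith),
      show pos (x - K₁) = 0 from max_eq_right (by linarith),
      ind_true' (show x < ub by linarith)]
    nlinarith [e2, hA4n, mul_nonneg hA1n (show (0:ℝ) ≤ ub - x by linarith)]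
  rcases lt_or_ge x ub with h2 | h2
  · rw [show pos (K₂ - x) = 0 from max_eq_right (by linarith),
      show pos (x - ub) = 0 from max_eq_right (by linarith),
      show pos (x - K₁) = 0 from max_eq_right (by linarith),
      ind_true' h2]
    nlinarith [e2, hA4n, mul_nonneg (by linarith : (0:ℝ) ≤ A2 - A1)
      (show (0:ℝ) ≤ x - K₂ by linarith),
      mul_nonneg hA1n (show (0:ℝ) ≤ ub - K₂ by linarith)]
  rcases le_or_gt x K₁ with h3 | h3
  · rw [show pos (K₂ - x) = 0 from max_eq_right (by linarith),
      show pos (x - ub) = x - ub from max_eq_left (by linarith),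
      show pos (x - K₁) = 0 from max_eq_right (by linarith),
      ind_false' (show ¬ x < ub by linarith)]
    nlinarith [e4, mul_nonneg hA1n (show (0:ℝ) ≤ K₁ - x by linarith)]
  · rw [show pos (K₂ - x) = 0 from max_eq_right (by linarith),
      show pos (x - ub) = x - ub from max_eq_left (by linarith),
      show pos (x - K₁) = x - K₁ from max_eq_left (by linarith),
      ind_false' (show ¬ x < ub by linarith)]
    nlinarith [e4]

lemma coreL4 (hlb : lb < 0) (hub : 0 < ub)
    (hK₁ : ub ≤ K₁) (hK₂ : lb ≤ K₂) (hK₂' : K₂ < ub) (hx : x < ub) :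
    1 ≤ ((ub - lb) / ((K₁ - lb) * (ub - K₂))) * pos (K₂ - x) +
        (1 - (K₁ - ub) / (K₁ - lb)) * ind (x < ub) -
        ((ub - lb) / ((K₁ - lb) * (ub - K₂))) * pos (x - ub) +
        (1 / (K₁ - lb)) * pos (x - K₁) + (K₁ - ub) / (K₁ - lb) := by
  have hd1 : (0:ℝ) < K₁ - lb := by linarith
  have hd2 : (0:ℝ) < ub - K₂ := by linarith
  have hd3 : (0:ℝ) < ub - lb := by linarith
  rw [show pos (x - ub) = 0 from max_eq_right (by linarith),
    show pos (x - K₁) = 0 from max_eq_right (by linarith),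
    ind_true' hx]
  have h1 : 0 ≤ ((ub - lb) / ((K₁ - lb) * (ub - K₂))) * pos (K₂ - x) := by
    apply mul_nonneg (by positivity) (le_max_right _ _)
  have h2 : (1 - (K₁ - ub) / (K₁ - lb)) + (K₁ - ub) / (K₁ - lb) = 1 := by ring
  linarith

end Algebra

theorem stmt3 (T : ℝ) (hT : 0 < T) (ω : ℝ → ℝ)
    (hcont : ContinuousOn ω (Icc 0 T)) (hω0 : ω 0 = 0)
    (lb ub K₁ K₂ : ℝ) (hlb : lb < 0) (hub : 0 < ub)
    (hK₁ : ub ≤ K₁) (hK₂ : lb ≤ K₂) (hK₂' : K₂ < ub) :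
    ind (sSup (ω '' Icc 0 T) < ub ∨ sInf (ω '' Icc 0 T) ≤ lb) ≤
      ((ub - lb) / ((K₁ - lb) * (ub - K₂))) * pos (K₂ - ω T) +
        (1 - (K₁ - ub) / (K₁ - lb)) * ind (ω T < ub) -
        ((ub - lb) / ((K₁ - lb) * (ub - K₂))) * pos (ω T - ub) +
        (1 / (K₁ - lb)) * pos (ω T - K₁) + (K₁ - ub) / (K₁ - lb) +
        ((ub - lb) / ((K₁ - lb) * (ub - K₂)) - 1 / (K₁ - lb)) * (ω T - ub) *
          ind (hit ω T ub < min (hit ω T lb) (T : EReal)) +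
        (1 / (K₁ - lb)) * (ω T - lb) *
          ind (hit ω T ub < hit ω T lb ∧ hit ω T lb ≤ (T : EReal)) +
        ((ub - lb) / ((K₁ - lb) * (ub - K₂))) * (ω T - lb) *
          ind (hit ω T lb < min (hit ω T ub) (T : EReal)) := by
  have h0mem : (0:ℝ) ∈ Icc 0 T := ⟨le_rfl, hT.le⟩
  have hTmem : T ∈ Icc 0 T := ⟨hT.le, le_rfl⟩
  have hLle := ind_le_one' (sSup (ω '' Icc 0 T) < ub ∨ sInf (ω '' Icc 0 T) ≤ lb)
  have hcompact : IsCompact (ω '' Icc 0 T) := (isCompact_Icc).image_of_continuousOn hcont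
  have hne : (ω '' Icc 0 T).Nonempty := ⟨ω 0, 0, h0mem, rfl⟩
  by_cases hu : ∃ t ∈ Icc 0 T, ω t = ub
  · obtain ⟨tu, htu, hωtu, hHu⟩ := hit_attained' hcont hu
    by_cases hl : ∃ t ∈ Icc 0 T, ω t = lb
    · -- both levels are hit
      obtain ⟨tl, htl, hωtl, hHl⟩ := hit_attained' hcont hl
      rcases lt_trichotomy tu tl with hc | hc | hc
      · -- ub hit first : A and B true, C false
        rw [ind_true' (show hit ω T ub < min (hit ω T lb) (T : EReal) by
            rw [hHu, hHl]
            exact lt_min (by exact_mod_cast hc)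
              (by exact_mod_cast lt_of_lt_of_le hc htl.2)),
          ind_true' (show hit ω T ub < hit ω T lb ∧ hit ω T lb ≤ (T : EReal) by
            rw [hHu, hHl]
            exact ⟨by exact_mod_cast hc, by exact_mod_cast htl.2⟩),
          ind_false' (show ¬ hit ω T lb < min (hit ω T ub) (T : EReal) by
            rw [hHu, hHl]
            intro h
            have h2 := lt_of_lt_of_le h (min_le_left _ _)
            have : tl < tu := by exact_mod_cast h2
            linarith)]
        have := coreL2 lb ub K₁ K₂ (ω T) hlb hub hK₁ hK₂ hK₂'
        linarith
      · exfalso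
        rw [hc, hωtl] at hωtu
        linarith
      · -- lb hit first : C true, A and B false
        rw [ind_false' (show ¬ hit ω T ub < min (hit ω T lb) (T : EReal) by
            rw [hHu, hHl]
            intro h
            have h2 := lt_of_lt_of_le h (min_le_left _ _)
            have : tu < tl := by exact_mod_cast h2
            linarith),
          ind_false' (show ¬ (hit ω T ub < hit ω T lb ∧ hit ω T lb ≤ (T : EReal)) by
            rw [hHu, hHl]
            rintro ⟨h, -⟩
            have : tu < tl := by exact_mod_cast h
            linarith),
          ind_true' (show hit ω T lb < min (hit ω T ub) (T : EReal) by
            rw [hHu, hHl]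
            exact lt_min (by exact_mod_cast hc)
              (by exact_mod_cast lt_of_lt_of_le hc htu.2))]
        have := coreL1 lb ub K₁ K₂ (ω T) hlb hub hK₁ hK₂ hK₂'
        linarith
    · -- ub hit, lb never hit
      have hHl : hit ω T lb = ⊤ := hit_eq_top' (fun t h0 hT' hx => hl ⟨t, ⟨h0, hT'⟩, hx⟩)
      have hLHS : ind (sSup (ω '' Icc 0 T) < ub ∨ sInf (ω '' Icc 0 T) ≤ lb) = 0 := by
        apply ind_false'
        rintro (h | h)
        · have : ub ≤ sSup (ω '' Icc 0 T) := le_csSup hcompact.bddAbove ⟨tu, htu, hωtu⟩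
          linarith
        · obtain ⟨ts, hts, hteq⟩ := hcompact.sInf_mem hne
          have : ω ts ≤ lb := by rw [hteq]; exact h
          obtain ⟨s, hs, hsx⟩ := reach_down' hcont hω0 hlb hts this
          exact hl ⟨s, hs, hsx⟩
      have iB : ¬ (hit ω T ub < hit ω T lb ∧ hit ω T lb ≤ (T : EReal)) := by
        rw [hHl]
        rintro ⟨-, h⟩
        exact absurd h (by simp)
      have iC : ¬ hit ω T lb < min (hit ω T ub) (T : EReal) := by
        rw [hHl]
        exact not_top_lt
      rw [hLHS, ind_false' iB, ind_false' iC]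
      have hminT : min (hit ω T lb) (T : EReal) = (T : EReal) := by
        rw [hHl]; exact min_eq_right le_top
      rcases lt_or_eq_of_le htu.2 with hc | hc
      · -- ub hit strictly before T : A true
        rw [ind_true' (show hit ω T ub < min (hit ω T lb) (T : EReal) by
            rw [hminT, hHu]; exact_mod_cast hc)]
        have := coreL3 lb ub K₁ K₂ (ω T) hlb hub hK₁ hK₂ hK₂'
        linarith
      · -- ub hit exactly at T
        rw [ind_false' (show ¬ hit ω T ub < min (hit ω T lb) (T : EReal) by
            rw [hminT, hHu, hc]
            exact lt_irrefl _)]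
        have hx : ω T = ub := by rw [← hc]; exact hωtu
        have hz : ((ub - lb) / ((K₁ - lb) * (ub - K₂)) - 1 / (K₁ - lb)) * (ω T - ub) = 0 := by
          rw [hx]; ring
        have := coreL3 lb ub K₁ K₂ (ω T) hlb hub hK₁ hK₂ hK₂'
        linarith
  · -- ub never hit
    have hHu : hit ω T ub = ⊤ := hit_eq_top' (fun t h0 hT' hx => hu ⟨t, ⟨h0, hT'⟩, hx⟩)
    have hωT : ω T < ub := by
      by_contra h
      push_neg at h
      exact hu (reach_up' hcont hω0 hub hTmem h)
    rw [ind_false' (show ¬ hit ω T ub < min (hit ω T lb) (T : EReal) by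
        rw [hHu]; exact not_top_lt),
      ind_false' (show ¬ (hit ω T ub < hit ω T lb ∧ hit ω T lb ≤ (T : EReal)) by
        rw [hHu]
        rintro ⟨h, -⟩
        exact not_top_lt h)]
    by_cases hl : ∃ t ∈ Icc 0 T, ω t = lb
    · obtain ⟨tl, htl, hωtl, hHl⟩ := hit_attained' hcont hl
      have hminT : min (hit ω T ub) (T : EReal) = (T : EReal) := by
        rw [hHu]; exact min_eq_right le_top
      rcases lt_or_eq_of_le htl.2 with hc | hc
      · rw [ind_true' (show hit ω T lb < min (hit ω T ub) (T : EReal) by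
            rw [hminT, hHl]; exact_mod_cast hc)]
        have := coreL1 lb ub K₁ K₂ (ω T) hlb hub hK₁ hK₂ hK₂'
        linarith
      · rw [ind_false' (show ¬ hit ω T lb < min (hit ω T ub) (T : EReal) by
            rw [hminT, hHl, hc]
            exact lt_irrefl _)]
        have := coreL4 lb ub K₁ K₂ (ω T) hlb hub hK₁ hK₂ hK₂' hωT
        linarith
    · have hHl : hit ω T lb = ⊤ := hit_eq_top' (fun t h0 hT' hx => hl ⟨t, ⟨h0, hT'⟩, hx⟩)
      rw [ind_false' (show ¬ hit ω T lb < min (hit ω T ub) (T : EReal) by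
          rw [hHl]; exact not_top_lt)]
      have := coreL4 lb ub K₁ K₂ (ω T) hlb hub hK₁ hK₂ hK₂' hωT
      linarith
end

section
/- Let μ be a centred probability measure on ℝ with distribution function F, b < 0 < b̄, and let ξ solve ∫(x−b) dμ_{F(b)}^ξ = −b. Define the measure ν = [−b/(b̄−b) − (ξ − F(b))]·δ_b + μ_{F(b)}^ξ. Then ν has total mass −b/(b̄−b) and barycentre b̄, i.e. ∫(x−b̄) dν = 0. -/
open MeasureTheory Set

/-- Distribution function of `μ`. -/
noncomputable def distF (μ : Measure ℝ) (x : ℝ) : ℝ := (μ (Iic x)).toReal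

/-- Left limit `F(x-)` of the distribution function. -/
noncomputable def distFm (μ : Measure ℝ) (x : ℝ) : ℝ := (μ (Iio x)).toReal

/-- Quantile function of `μ`. -/
noncomputable def quantile (μ : Measure ℝ) (u : ℝ) : ℝ :=
  sInf {x : ℝ | u ≤ distF μ x}

/-- The sub-probability measure `μ_p^q`, i.e. `μ` restricted to its quantile range `(p,q]`,
realised as the image under the quantile function of Lebesgue measure on `(p,q]`. -/
noncomputable def qmeas (μ : Measure ℝ) (p q : ℝ) : Measure ℝ :=
  (volume.restrict (Ioc p q)).map (quantile μ)

/-- `m̃_p^q = ∫ x dμ_p^q`. -/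
noncomputable def mtil (μ : Measure ℝ) (p q : ℝ) : ℝ :=
  ∫ u in Ioc p q, quantile μ u

/-- The barycentre `m_p^q` of `μ` restricted to the quantile range `(p,q]`. -/
noncomputable def bary (μ : Measure ℝ) (p q : ℝ) : ℝ :=
  if p < q then (q - p)⁻¹ * mtil μ p q else quantile μ q


open Filter Topology

lemma distF_mono' (μ : Measure ℝ) [IsProbabilityMeasure μ] :
    Monotone (distF μ) := fun _ _ hab =>
  ENNReal.toReal_le_toReal (measure_ne_top μ _) (measure_ne_top μ _) |>.mpr
    (measure_mono (Iic_subset_Iic.2 hab))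

lemma exists_distF_lt (μ : Measure ℝ) [IsProbabilityMeasure μ] {u : ℝ} (hu : 0 < u) :
    ∃ x : ℝ, distF μ x < u := by
  by_contra h
  push_neg at h
  have hkey : ∀ n : ℕ, ENNReal.ofReal u ≤ μ (Iic (-(n:ℝ))) := fun n =>
    ENNReal.ofReal_le_of_le_toReal (h _)
  have hanti : Antitone (fun n : ℕ => Iic (-(n:ℝ))) := fun m n hmn =>
    Iic_subset_Iic.2 (by exact_mod_cast neg_le_neg (by exact_mod_cast hmn))
  have hiInter : (⋂ n : ℕ, Iic (-(n:ℝ))) = ∅ := by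
    ext x
    simp only [mem_iInter, mem_Iic, mem_empty_iff_false, iff_false, not_forall]
    obtain ⟨n, hn⟩ := exists_nat_gt (-x)
    exact ⟨n, by push_neg; linarith⟩
  have := tendsto_measure_iInter_atTop (μ := μ)
    (fun n : ℕ => (measurableSet_Iic).nullMeasurableSet) hanti ⟨0, measure_ne_top μ _⟩
  rw [hiInter, measure_empty] at this
  have h0 : ENNReal.ofReal u ≤ 0 := ge_of_tendsto this (Eventually.of_forall hkey)
  rw [nonpos_iff_eq_zero, ENNReal.ofReal_eq_zero] at h0
  linarith

lemma exists_le_distF (μ : Measure ℝ) [IsProbabilityMeasure μ] {u : ℝ} (hu : u < 1) :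
    ∃ x : ℝ, u ≤ distF μ x := by
  have h1 : Tendsto (fun x => μ (Iic x)) atTop (𝓝 (μ univ)) := tendsto_measure_Iic_atTop μ
  rw [measure_univ] at h1
  have h2 : Tendsto (fun x => distF μ x) atTop (𝓝 1) := by
    have := (ENNReal.tendsto_toReal (by simp : (1:ENNReal) ≠ ⊤)).comp h1
    simpa [distF, Function.comp_def] using this
  obtain ⟨x, hx⟩ := (h2.eventually (eventually_gt_nhds hu)).exists
  exact ⟨x, hx.le⟩

lemma quantile_monoOn (μ : Measure ℝ) [IsProbabilityMeasure μ] :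
    MonotoneOn (quantile μ) (Ioo 0 1) := by
  intro u hu v hv huv
  apply csInf_le_csInf
  · obtain ⟨x0, hx0⟩ := exists_distF_lt μ hu.1
    refine ⟨x0, fun y hy => ?_⟩
    simp only [mem_setOf_eq] at hy
    by_contra hlt
    push_neg at hlt
    have hm := distF_mono' μ hlt.le
    linarith
  · obtain ⟨x, hx⟩ := exists_le_distF μ hv.2
    exact ⟨x, hx⟩
  · exact fun x hx => le_trans huv hx

theorem stmt10 (μ : Measure ℝ) [IsProbabilityMeasure μ]
    (hint : Integrable id μ) (hcent : ∫ x, x ∂μ = 0)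
    (lb ub : ℝ) (hlb : lb < 0) (hub : 0 < ub)
    (ξ : ℝ) (hξ : ξ ∈ Ioc (distF μ lb) 1)
    (hξeq : (∫ u in Ioc (distF μ lb) ξ, (quantile μ u - lb)) = -lb)
    (hmass : 0 ≤ -lb / (ub - lb) - (ξ - distF μ lb)) :
    ((ENNReal.ofReal (-lb / (ub - lb) - (ξ - distF μ lb)) • Measure.dirac lb +
        qmeas μ (distF μ lb) ξ) univ).toReal = -lb / (ub - lb) ∧
    (∫ x, (x - ub) ∂(ENNReal.ofReal (-lb / (ub - lb) - (ξ - distF μ lb)) •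
        Measure.dirac lb + qmeas μ (distF μ lb) ξ)) = 0 := by
  set p := distF μ lb with hp
  have hp0 : 0 ≤ p := ENNReal.toReal_nonneg
  have hpξ : p < ξ := hξ.1
  have hξ1 : ξ ≤ 1 := hξ.2
  set c : ℝ := -lb / (ub - lb) - (ξ - p) with hc
  have hsub : Ioo p ξ ⊆ Ioo 0 1 := fun x hx =>
    ⟨lt_of_le_of_lt hp0 hx.1, lt_of_lt_of_le hx.2 hξ1⟩
  have hrestr : volume.restrict (Ioc p ξ) = volume.restrict (Ioo p ξ) :=
    (Measure.restrict_congr_set Ioo_ae_eq_Ioc).symm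
  have haem : AEMeasurable (quantile μ) (volume.restrict (Ioc p ξ)) := by
    rw [hrestr]
    exact aemeasurable_restrict_of_monotoneOn measurableSet_Ioo
      ((quantile_monoOn μ).mono hsub)
  have hvol : volume (Ioc p ξ) = ENNReal.ofReal (ξ - p) := Real.volume_Ioc
  have hqm : qmeas μ p ξ univ = ENNReal.ofReal (ξ - p) := by
    rw [qmeas, Measure.map_apply_of_aemeasurable haem MeasurableSet.univ,
      preimage_univ, Measure.restrict_apply_univ, hvol]
  constructor
  · rw [Measure.add_apply, Measure.smul_apply, hqm, measure_univ, smul_eq_mul, mul_one,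
      ← ENNReal.ofReal_add hmass (by linarith), ENNReal.toReal_ofReal (by linarith)]
    ring
  · -- integrability
    have hfin : volume (Ioc p ξ) ≠ ⊤ := by rw [hvol]; exact ENNReal.ofReal_ne_top
    have hintg : IntegrableOn (fun u => quantile μ u - lb) (Ioc p ξ) volume := by
      by_contra h
      rw [integral_undef h] at hξeq
      linarith
    have hconst : ∀ r : ℝ, IntegrableOn (fun _ : ℝ => r) (Ioc p ξ) volume := fun r =>
      integrableOn_const hfin
    have hub' : IntegrableOn (fun u => quantile μ u - ub) (Ioc p ξ) volume := by
      have := hintg.add (hconst (lb - ub))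
      exact this.congr (Eventually.of_forall fun x => by simp only [Pi.add_apply]; ring)
    have hsm : AEStronglyMeasurable (fun x : ℝ => x - ub) (qmeas μ p ξ) :=
      (measurable_id.sub_const ub).aestronglyMeasurable
    have h2 : Integrable (fun x : ℝ => x - ub) (qmeas μ p ξ) := by
      rw [qmeas, integrable_map_measure hsm haem]
      exact hub'
    have h1 : Integrable (fun x : ℝ => x - ub) (ENNReal.ofReal c • Measure.dirac lb) := by
      refine Integrable.smul_measure ?_ ENNReal.ofReal_ne_top
      refine (integrable_const (lb - ub)).congr ?_
      rw [Filter.EventuallyEq, ae_dirac_eq]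
      simp
    rw [integral_add_measure h1 h2, integral_smul_measure, integral_dirac,
      ENNReal.toReal_ofReal hmass]
    rw [qmeas, integral_map haem hsm]
    have hsplit : (∫ u in Ioc p ξ, (quantile μ u - ub)) =
        (∫ u in Ioc p ξ, (quantile μ u - lb)) + ∫ _ in Ioc p ξ, (lb - ub) := by
      rw [← integral_add hintg (hconst (lb - ub))]
      exact integral_congr_ae (Eventually.of_forall fun x => by ring)
    rw [hsplit, hξeq, setIntegral_const, measureReal_def, hvol, ENNReal.toReal_ofReal (by linarith : (0:ℝ) ≤ ξ - p)]
    have hne : ub - lb ≠ 0 := by linarith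
    have hkey : c * (lb - ub) = lb + (ξ - p) * (ub - lb) := by
      rw [hc]; field_simp; ring
    simp only [smul_eq_mul]
    rw [hkey]; ring
end

section
/- Let μ be a centred probability measure on ℝ with distribution function F, b < 0 < b̄, γ = 1 − F(b̄−) + F(b), and suppose λ ∈ (0,γ] satisfies m̃_{F(b)}^{F(b̄−)} + λb + (γ−λ)b̄ = 0, and π* satisfies m̃^{F(b)} + m̃_{F(b̄−)}^{π*} = b(F(b) + π* − F(b̄−)). Define ν = ((γ−λ−(1−π*))δ_b + μ_{π*})/(γ−λ). Then ν has barycentre b̄, i.e. (γ−λ)∫x dν = b̄(γ−λ). -/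
open MeasureTheory Set

open ProbabilityTheory Filter Topology

section Aux

variable {μ : Measure ℝ} [IsProbabilityMeasure μ]

lemma distF_eq_cdf (x : ℝ) : distF μ x = cdf μ x := (cdf_eq_real μ x).symm

lemma quantile_eq (u : ℝ) : quantile μ u = sInf {x : ℝ | u ≤ cdf μ x} := by
  unfold quantile
  simp_rw [distF_eq_cdf]

lemma bddBelow_S {u : ℝ} (hu : 0 < u) : BddBelow {x : ℝ | u ≤ cdf μ x} := by
  obtain ⟨x0, hx0⟩ : ∃ x0, cdf μ x0 < u :=
    ((tendsto_cdf_atBot μ).eventually (gt_mem_nhds hu)).exists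
  refine ⟨x0, fun y hy => ?_⟩
  by_contra h
  push_neg at h
  exact absurd hy (not_le.2 (lt_of_le_of_lt (monotone_cdf μ h.le) hx0))

lemma S_nonempty {u : ℝ} (hu : u < 1) : {x : ℝ | u ≤ cdf μ x}.Nonempty := by
  obtain ⟨x1, hx1⟩ := ((tendsto_cdf_atTop μ).eventually (lt_mem_nhds hu)).exists
  exact ⟨x1, hx1.le⟩

lemma quantile_mem {u : ℝ} (hu0 : 0 < u) (hu1 : u < 1) : u ≤ cdf μ (quantile μ u) := by
  rw [quantile_eq]
  set S := {x : ℝ | u ≤ cdf μ x} with hS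
  have hne : S.Nonempty := S_nonempty hu1
  have hbdd : BddBelow S := bddBelow_S hu0
  have key : ∀ y ∈ Ioi (sInf S), u ≤ cdf μ y := by
    intro y hy
    obtain ⟨s, hs, hsy⟩ := (csInf_lt_iff hbdd hne).1 hy
    exact le_trans hs (monotone_cdf μ hsy.le)
  have hc : Tendsto (cdf μ) (𝓝[>] (sInf S)) (𝓝 (cdf μ (sInf S))) :=
    ((cdf μ).right_continuous _).mono_left (nhdsWithin_mono _ Ioi_subset_Ici_self)
  exact ge_of_tendsto hc (eventually_nhdsWithin_of_forall key)

lemma quantile_le_iff {u x : ℝ} (hu0 : 0 < u) (hu1 : u < 1) :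
    quantile μ u ≤ x ↔ u ≤ cdf μ x := by
  constructor
  · intro h
    exact (quantile_mem hu0 hu1).trans (monotone_cdf μ h)
  · intro h
    rw [quantile_eq]
    exact csInf_le (bddBelow_S hu0) h

lemma quantile_le_of_le {u x : ℝ} (hu0 : 0 < u) (h : u ≤ distF μ x) : quantile μ u ≤ x := by
  rw [quantile_eq]
  exact csInf_le (bddBelow_S hu0) (by rwa [distF_eq_cdf] at h)

lemma quantile_eq_zero {u : ℝ} (hu : 1 < u) : quantile μ u = 0 := by
  rw [quantile_eq]
  have : {x : ℝ | u ≤ cdf μ x} = ∅ := by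
    ext x
    simp only [mem_setOf_eq, mem_empty_iff_false, iff_false, not_le]
    exact lt_of_le_of_lt (cdf_le_one μ x) hu
  rw [this, Real.sInf_empty]

lemma quantile_monotoneOn : MonotoneOn (quantile μ) (Ioo 0 1) := by
  intro u hu v hv huv
  rw [quantile_eq, quantile_eq]
  exact csInf_le_csInf (bddBelow_S hu.1) (S_nonempty hv.2) fun x hx => le_trans huv hx

lemma quantile_aemeasurable : AEMeasurable (quantile μ) (volume.restrict (Ioo 0 1)) :=
  aemeasurable_restrict_of_monotoneOn measurableSet_Ioo quantile_monotoneOn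

lemma restrict_Ioc_eq : volume.restrict (Ioc (0:ℝ) 1) = volume.restrict (Ioo 0 1) :=
  (Measure.restrict_congr_set Ioo_ae_eq_Ioc).symm

lemma quantile_aemeasurable' : AEMeasurable (quantile μ) (volume.restrict (Ioc 0 1)) := by
  rw [restrict_Ioc_eq]
  exact quantile_aemeasurable

lemma map_quantile : (volume.restrict (Ioc (0:ℝ) 1)).map (quantile μ) = μ := by
  rw [restrict_Ioc_eq]
  have hmeas : AEMeasurable (quantile μ) (volume.restrict (Ioo 0 1)) := quantile_aemeasurable
  have hfin : IsFiniteMeasure ((volume.restrict (Ioo (0:ℝ) 1)).map (quantile μ)) := by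
    constructor
    rw [Measure.map_apply_of_aemeasurable hmeas MeasurableSet.univ]
    calc (volume.restrict (Ioo (0:ℝ) 1)) (quantile μ ⁻¹' univ)
        ≤ (volume.restrict (Ioo (0:ℝ) 1)) univ := measure_mono (subset_univ _)
      _ = volume (Ioo (0:ℝ) 1) := by rw [Measure.restrict_apply_univ]
      _ < ⊤ := by simp [Real.volume_Ioo]
  refine Measure.ext_of_Iic _ _ fun x => ?_
  rw [Measure.map_apply_of_aemeasurable hmeas measurableSet_Iic,
      Measure.restrict_apply' measurableSet_Ioo]
  have hc0 : 0 ≤ cdf μ x := cdf_nonneg μ x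
  have hc1 : cdf μ x ≤ 1 := cdf_le_one μ x
  have hset : quantile μ ⁻¹' Iic x ∩ Ioo 0 1 = Iic (cdf μ x) ∩ Ioo 0 1 := by
    ext u
    simp only [mem_inter_iff, mem_preimage, mem_Iic, mem_Ioo, and_congr_left_iff]
    intro hu
    exact quantile_le_iff hu.1 hu.2
  rw [hset, ← ofReal_cdf μ x]
  rcases eq_or_lt_of_le hc1 with h1 | h1
  · have : Iic (cdf μ x) ∩ Ioo (0:ℝ) 1 = Ioo 0 1 := by
      rw [← h1]
      refine inter_eq_right.2 fun u hu => ?_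
      exact hu.2.le
    rw [this, Real.volume_Ioo, ← h1]
    norm_num
  · have : Iic (cdf μ x) ∩ Ioo (0:ℝ) 1 = Ioc 0 (cdf μ x) := by
      ext u
      simp only [mem_inter_iff, mem_Iic, mem_Ioo, mem_Ioc]
      constructor
      · rintro ⟨h, h2, _⟩; exact ⟨h2, h⟩
      · rintro ⟨h2, h⟩; exact ⟨h, h2, lt_of_le_of_lt h h1⟩
    rw [this, Real.volume_Ioc, sub_zero]

lemma quantile_integrableOn (hint : Integrable id μ) :
    IntegrableOn (quantile μ) (Ioc 0 1) volume := by
  have h := (integrable_map_measure (f := quantile μ) (g := id)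
      (by rw [map_quantile]; exact aestronglyMeasurable_id) quantile_aemeasurable').1
  rw [map_quantile] at h
  exact h hint

lemma mtil_zero_one (hcent : ∫ x, x ∂μ = 0) : mtil μ 0 1 = 0 := by
  have h := integral_map (φ := quantile μ) (f := fun x : ℝ => x) quantile_aemeasurable'
    (by rw [map_quantile]; exact measurable_id.aestronglyMeasurable)
  rw [map_quantile] at h
  unfold mtil
  rw [← h, hcent]

lemma mtil_add {p q r : ℝ} (hpq : p ≤ q) (hqr : q ≤ r)
    (h1 : IntegrableOn (quantile μ) (Ioc p q) volume)
    (h2 : IntegrableOn (quantile μ) (Ioc q r) volume) :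
    mtil μ p q + mtil μ q r = mtil μ p r := by
  unfold mtil
  rw [← Ioc_union_Ioc_eq_Ioc hpq hqr,
    setIntegral_union (Ioc_disjoint_Ioc_of_le le_rfl) measurableSet_Ioc h1 h2]

lemma mtil_one_right {r : ℝ} (hr : 1 ≤ r) : mtil μ 1 r = 0 := by
  unfold mtil
  rw [setIntegral_congr_fun measurableSet_Ioc (g := fun _ => (0:ℝ))
    (fun u hu => quantile_eq_zero hu.1)]
  simp

lemma integrableOn_one_right {r : ℝ} : IntegrableOn (quantile μ) (Ioc 1 r) volume := by
  rw [integrableOn_congr_fun (g := fun _ => (0:ℝ)) (fun u hu => quantile_eq_zero hu.1)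
    measurableSet_Ioc]
  exact integrableOn_zero

lemma qmeas_aux (hint : Integrable id μ) {p : ℝ} (hp0 : 0 ≤ p) :
    Integrable (fun x => x) (qmeas μ p 1) ∧ (∫ x, x ∂(qmeas μ p 1)) = mtil μ p 1 := by
  rcases le_or_gt p 1 with hp1 | hp1
  · have hsub : Ioc p 1 ⊆ Ioc 0 1 := Ioc_subset_Ioc_left hp0
    have hle : volume.restrict (Ioc p 1) ≤ volume.restrict (Ioc (0:ℝ) 1) :=
      Measure.restrict_mono hsub le_rfl
    have hmeas : AEMeasurable (quantile μ) (volume.restrict (Ioc p 1)) :=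
      quantile_aemeasurable'.mono_measure hle
    have hio : IntegrableOn (quantile μ) (Ioc p 1) volume :=
      (quantile_integrableOn hint).mono_set hsub
    constructor
    · exact (integrable_map_measure measurable_id.aestronglyMeasurable hmeas).2 hio
    · exact integral_map hmeas measurable_id.aestronglyMeasurable
  · have hemp : Ioc p 1 = (∅ : Set ℝ) := Ioc_eq_empty (by linarith)
    unfold qmeas mtil
    rw [hemp]
    constructor
    · simp
    · simp

end Aux

theorem stmt13 (μ : Measure ℝ) [IsProbabilityMeasure μ]
    (hint : Integrable id μ) (hcent : ∫ x, x ∂μ = 0)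
    (lb ub : ℝ) (hlb : lb < 0) (hub : 0 < ub)
    (l π : ℝ) (hl : l ∈ Ioc 0 (1 - distFm μ ub + distF μ lb))
    (hlγ : l < 1 - distFm μ ub + distF μ lb)
    (heq1 : mtil μ (distF μ lb) (distFm μ ub) + l * lb +
      ((1 - distFm μ ub + distF μ lb) - l) * ub = 0)
    (heq2 : mtil μ 0 (distF μ lb) + mtil μ (distFm μ ub) π =
      lb * (distF μ lb + π - distFm μ ub))
    (hmass : 0 ≤ (1 - distFm μ ub + distF μ lb) - l - (1 - π)) :
    (∫ x, x ∂((ENNReal.ofReal ((1 - distFm μ ub + distF μ lb) - l))⁻¹ •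
      (ENNReal.ofReal ((1 - distFm μ ub + distF μ lb) - l - (1 - π)) •
          Measure.dirac lb + qmeas μ π 1))) = ub := by
  set F := distF μ lb with hF
  set Fm := distFm μ ub with hFm
  have hF0 : 0 ≤ F := ENNReal.toReal_nonneg
  have hFFm : F ≤ Fm := by
    refine ENNReal.toReal_mono (measure_ne_top μ _) (measure_mono fun x hx => ?_)
    exact lt_of_le_of_lt hx (lt_trans hlb hub)
  have hFm1 : Fm ≤ 1 := by
    have : μ (Iio ub) ≤ 1 := prob_le_one
    calc Fm ≤ (1 : ENNReal).toReal := ENNReal.toReal_mono (by simp) this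
    _ = 1 := by simp
  have hc : 0 < (1 - Fm + F) - l := by linarith
  -- π ≥ Fm
  have hπFm : Fm ≤ π := by
    by_contra h
    push_neg at h
    have hmtilFmπ : mtil μ Fm π = 0 := by
      unfold mtil
      rw [Ioc_eq_empty (by exact not_lt.2 h.le)]
      simp
    have hbound : mtil μ 0 F ≤ lb * F := by
      have hio : IntegrableOn (quantile μ) (Ioc 0 F) volume :=
        (quantile_integrableOn hint).mono_set (Ioc_subset_Ioc_right (le_trans hFFm hFm1))
      have hconst : IntegrableOn (fun _ : ℝ => lb) (Ioc 0 F) volume := by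
        exact integrableOn_const measure_Ioc_lt_top.ne
      have hmono := setIntegral_mono_on hio hconst measurableSet_Ioc
        (fun u hu => quantile_le_of_le hu.1 hu.2)
      rw [setIntegral_const] at hmono
      rw [measureReal_def, Real.volume_Ioc, sub_zero, ENNReal.toReal_ofReal hF0, smul_eq_mul] at hmono
      calc mtil μ 0 F ≤ F * lb := hmono
      _ = lb * F := mul_comm _ _
    have hpos : 0 < lb * (π - Fm) := mul_pos_of_neg_of_neg hlb (by linarith)
    rw [hmtilFmπ, add_zero] at heq2
    nlinarith [heq2, hbound, hpos]
  have hπ0 : 0 ≤ π := le_trans (le_trans hF0 hFFm) hπFm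
  -- splitting
  have hioF : IntegrableOn (quantile μ) (Ioc 0 F) volume :=
    (quantile_integrableOn hint).mono_set (Ioc_subset_Ioc_right (le_trans hFFm hFm1))
  have hioFFm : IntegrableOn (quantile μ) (Ioc F Fm) volume :=
    (quantile_integrableOn hint).mono_set (Ioc_subset_Ioc hF0 hFm1)
  have hioFm1 : IntegrableOn (quantile μ) (Ioc Fm 1) volume :=
    (quantile_integrableOn hint).mono_set (Ioc_subset_Ioc_left (le_trans hF0 hFFm))
  have hsplit1 : mtil μ 0 F + mtil μ F Fm = mtil μ 0 Fm := mtil_add hF0 hFFm hioF hioFFm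
  have hsplit2 : mtil μ 0 Fm + mtil μ Fm 1 = mtil μ 0 1 :=
    mtil_add (le_trans hF0 hFFm) hFm1
      ((quantile_integrableOn hint).mono_set (Ioc_subset_Ioc_right hFm1)) hioFm1
  have htail : mtil μ Fm π + mtil μ π 1 = mtil μ Fm 1 := by
    rcases le_or_gt π 1 with hπ1 | hπ1
    · exact mtil_add hπFm hπ1
        ((quantile_integrableOn hint).mono_set
          (Ioc_subset_Ioc (le_trans hF0 hFFm) hπ1))
        ((quantile_integrableOn hint).mono_set (Ioc_subset_Ioc_left hπ0))
    · have h1 : mtil μ π 1 = 0 := by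
        unfold mtil
        rw [Ioc_eq_empty (by exact not_lt.2 hπ1.le)]
        simp
      have h2 : mtil μ Fm 1 + mtil μ 1 π = mtil μ Fm π :=
        mtil_add hFm1 hπ1.le hioFm1 integrableOn_one_right
      have h3 : mtil μ 1 π = 0 := mtil_one_right hπ1.le
      linarith
  have hzero : mtil μ 0 1 = 0 := mtil_zero_one hcent
  -- integral computation
  obtain ⟨hintq, hiq⟩ := qmeas_aux (μ := μ) hint hπ0
  have hintd : Integrable (fun x : ℝ => x)
      (ENNReal.ofReal ((1 - Fm + F) - l - (1 - π)) • Measure.dirac lb) := by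
    refine Integrable.smul_measure ?_ ENNReal.ofReal_ne_top
    exact (integrable_const lb).congr (ae_eq_dirac (fun x : ℝ => x)).symm
  rw [integral_smul_measure, integral_add_measure hintd hintq, integral_smul_measure,
    integral_dirac, hiq]
  rw [ENNReal.toReal_inv, ENNReal.toReal_ofReal hc.le, ENNReal.toReal_ofReal hmass,
    smul_eq_mul, smul_eq_mul]
  have hkey : ((1 - Fm + F) - l - (1 - π)) * lb + mtil μ π 1 = ((1 - Fm + F) - l) * ub := by
    nlinarith [heq1, heq2, hsplit1, hsplit2, htail, hzero]
  rw [hkey, inv_mul_cancel_left₀ (ne_of_gt hc)]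
end
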